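/- Let V be an abelian group, let m and n be natural numbers with n ≤ m, let (0) = F^m ⊆ F^{m-1} ⊆ … ⊆ F^1 ⊆ F^0 = V be a descending filtration of V by subgroups, and let N : V → V be a group endomorphism such that N(F^{i-1}) ⊆ F^i for all i ≥ 1 and ker(N) ∩ N^i(V) = ker(N) ∩ F^i for all i ≥ n. Then N^i(V) = F^i for all i ≥ n. -/

import Mathlib

/-- **Lemma 6.1 (filtration lemma).** Let `V` be an abelian group, `m, n ∈ ℕ` with
`n ≤ m`, let `(0) = F^m ⊆ … ⊆ F^1 ⊆ F^0 = V` be a descending filtration of `V` by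
subgroups (with `F^i = 0` for `i ≥ m`), and let `N : V → V` be a group endomorphism
with `N(F^{i-1}) ⊆ F^i` for all `i ≥ 1` and `ker(N) ∩ N^i(V) = ker(N) ∩ F^i` for all
`i ≥ n`.  Then `N^i(V) = F^i` for all `i ≥ n`. -/
theorem stmt0 (V : Type*) [AddCommGroup V] (m n : ℕ) (hnm : n ≤ m)
    (F : ℕ → AddSubgroup V)
    (hdesc : ∀ i : ℕ, F (i + 1) ≤ F i)
    (hFtop : F 0 = ⊤)
    (hFbot : ∀ i : ℕ, m ≤ i → F i = ⊥)
    (N : AddMonoid.End V)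
    (hshift : ∀ i : ℕ, 1 ≤ i → (F (i - 1)).map (N : V →+ V) ≤ F i)
    (hker : ∀ i : ℕ, n ≤ i →
      (N : V →+ V).ker ⊓ ((N ^ i : AddMonoid.End V) : V →+ V).range
        = (N : V →+ V).ker ⊓ F i) :
    ∀ i : ℕ, n ≤ i → ((N ^ i : AddMonoid.End V) : V →+ V).range = F i := by
  have hsub : ∀ i : ℕ, ((N ^ i : AddMonoid.End V) : V →+ V).range ≤ F i := by
    intro i
    induction i with
    | zero => rw [hFtop]; exact le_top
    | succ i ih =>
      rintro _ ⟨x, rfl⟩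
      have h1 : (N ^ (i + 1) : AddMonoid.End V) x = N ((N ^ i : AddMonoid.End V) x) := by
        rw [pow_succ']; rfl
      erw [h1]
      exact hshift (i + 1) (by omega) ⟨(N ^ i : AddMonoid.End V) x, ih ⟨x, rfl⟩, rfl⟩
  have key : ∀ k i : ℕ, n ≤ i → m ≤ i + k →
      ((N ^ i : AddMonoid.End V) : V →+ V).range = F i := by
    intro k
    induction k with
    | zero =>
      intro i hni hmi
      refine le_antisymm (hsub i) ?_
      rw [hFbot i (by omega)]
      exact bot_le
    | succ k ih =>
      intro i hni hmi
      have hnext := ih (i + 1) (by omega) (by omega)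
      refine le_antisymm (hsub i) ?_
      intro x hx
      have hNx : N x ∈ F (i + 1) := hshift (i + 1) (by omega) ⟨x, hx, rfl⟩
      rw [← hnext] at hNx
      obtain ⟨y, hy⟩ := hNx
      have hmemF : x - (N ^ i : AddMonoid.End V) y ∈ (N : V →+ V).ker ⊓ F i := by
        constructor
        · have h2 : N ((N ^ i : AddMonoid.End V) y) = (N ^ (i + 1) : AddMonoid.End V) y := by
            rw [pow_succ']; rfl
          show N (x - (N ^ i : AddMonoid.End V) y) = 0
          rw [map_sub, h2]; erw [hy]; rw [sub_self]
        · exact (F i).sub_mem hx (hsub i ⟨y, rfl⟩)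
      rw [← hker i hni] at hmemF
      obtain ⟨z, hz⟩ := hmemF.2
      exact ⟨z + y, by erw [map_add, hz]; exact sub_add_cancel x _⟩
  intro i hni
  exact key m i hni (by omega)
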